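/- Let k' be a field of characteristic 0. Let v_1, …, v_r ∈ ℤ^d be nonzero vectors whose set of nonnegative real combinations σ is a salient and full-dimensional convex cone in ℝ^d, and let ν: ℤ^r → ℤ^d be the homomorphism with ν(e_i) = v_i. Let P = {u ∈ Hom(ℤ^d, ℤ) : u(x) ≥ 0 for all x ∈ σ} and F = {φ ∈ Hom(ℤ^r, ℤ) : φ(e_i) ≥ 0 for all i}. Let w ∈ σ ∩ ℤ^d, let (w̃_1, …, w̃_r) ∈ ℕ^r satisfy Σ_i w̃_i v_i = w, and let φ: P → k'[[t]] be a homomorphism of monoids into the multiplicative monoid of k'[[t]] such that the t-adic order of φ(u) equals u(w) for every u ∈ P. Then there exist a finite field extension k'' of k' and a monoid homomorphism ψ: F → k''[[t]] (into the multiplicative monoid) such that the t-adic order of ψ(f) equals f(w̃) for every f ∈ F, where w̃ = (w̃_1, …, w̃_r) ∈ ℤ^r, and ψ(u∘ν) = φ(u) in k''[[t]] for every u ∈ P. -/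

import Mathlib

universe u

open PowerSeries

section AuxPowerSeries

variable {K : Type*} [Field K]

theorem ps_mem_span_X_pow {f : K⟦X⟧} {n : ℕ} :
    f ∈ (Ideal.span {(X : K⟦X⟧)}) ^ n ↔ ∀ i < n, coeff i f = 0 := by
  rw [Ideal.span_singleton_pow, Ideal.mem_span_singleton, PowerSeries.X_pow_dvd_iff]

instance ps_hausdorff : IsHausdorff (Ideal.span {(X : K⟦X⟧)}) K⟦X⟧ := by
  constructor
  intro x hx
  ext n
  have := hx (n + 1)
  rw [SModEq.zero, smul_eq_mul, Ideal.mul_top, ps_mem_span_X_pow] at this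
  simpa using this n (by omega)

instance ps_precomplete : IsPrecomplete (Ideal.span {(X : K⟦X⟧)}) K⟦X⟧ := by
  constructor
  intro f hf
  refine ⟨PowerSeries.mk (fun i => coeff i (f (i + 1))), fun n => ?_⟩
  rw [SModEq.sub_mem, smul_eq_mul, Ideal.mul_top, ps_mem_span_X_pow]
  intro i hi
  have := hf (show i + 1 ≤ n by omega)
  rw [SModEq.sub_mem, smul_eq_mul, Ideal.mul_top, ps_mem_span_X_pow] at this
  have h2 := this i (by omega)
  rw [map_sub, sub_eq_zero] at h2 ⊢
  rw [coeff_mk]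
  exact h2.symm

instance ps_adic_complete : IsAdicComplete (Ideal.span {(X : K⟦X⟧)}) K⟦X⟧ := ⟨⟩

theorem ps_exists_nth_root [CharZero K] (x : K⟦X⟧) (hx : IsUnit x) (m : ℕ) (hm : m ≠ 0)
    (δ : K) (hδ : δ ^ m = constantCoeff x) : ∃ y : K⟦X⟧, IsUnit y ∧ y ^ m = x := by
  have hc : constantCoeff x ≠ 0 := (PowerSeries.isUnit_iff_constantCoeff.mp hx).ne_zero
  have hδ0 : δ ≠ 0 := by
    intro h; apply hc; rw [← hδ, h, zero_pow hm]
  haveI hmax : (Ideal.span {(X : K⟦X⟧)}).IsMaximal := by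
    rw [← PowerSeries.maximalIdeal_eq_span_X]; infer_instance
  set f : Polynomial K⟦X⟧ := Polynomial.X ^ m - Polynomial.C x with hf
  have hmonic : f.Monic := Polynomial.monic_X_pow_sub_C x hm
  have h1 : f.eval (PowerSeries.C δ) ∈ Ideal.span {(X : K⟦X⟧)} := by
    rw [Ideal.mem_span_singleton, PowerSeries.X_dvd_iff]
    simp [hf, ← hδ]
  have h2 : IsUnit (Ideal.Quotient.mk (Ideal.span {(X : K⟦X⟧)})
      (f.derivative.eval (PowerSeries.C δ))) := by
    letI : Field (K⟦X⟧ ⧸ Ideal.span {(X : K⟦X⟧)}) := Ideal.Quotient.field _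
    rw [isUnit_iff_ne_zero, Ne, Ideal.Quotient.eq_zero_iff_mem, Ideal.mem_span_singleton,
      PowerSeries.X_dvd_iff]
    simp only [hf, Polynomial.derivative_sub, Polynomial.derivative_C, sub_zero,
      Polynomial.derivative_X_pow, Polynomial.eval_mul, Polynomial.eval_natCast,
      Polynomial.eval_pow, Polynomial.eval_X, map_mul, map_pow, Polynomial.eval_C]
    simp only [map_natCast, PowerSeries.constantCoeff_C]
    exact mul_ne_zero (Nat.cast_ne_zero.mpr hm) (pow_ne_zero _ hδ0)
  obtain ⟨a, ha, hamem⟩ := HenselianRing.is_henselian f hmonic (PowerSeries.C δ) h1 h2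
  refine ⟨a, ?_, ?_⟩
  · rw [PowerSeries.isUnit_iff_constantCoeff, isUnit_iff_ne_zero]
    rw [Ideal.mem_span_singleton, PowerSeries.X_dvd_iff, map_sub, PowerSeries.constantCoeff_C,
      sub_eq_zero] at hamem
    rw [hamem]; exact hδ0
  · have := ha
    simp only [hf, Polynomial.IsRoot, Polynomial.eval_sub, Polynomial.eval_pow,
      Polynomial.eval_X, Polynomial.eval_C, sub_eq_zero] at this
    exact this

/-- Get a `z`-th root (for a nonzero integer `z`) of a unit of a power series ring, provided
the constant coefficient of the unit (or of its inverse, if `z < 0`) has a `z.natAbs`-th root. -/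
theorem ps_exists_zpow_root [CharZero K] (Y : (K⟦X⟧)ˣ) (z : ℤ) (hz : z ≠ 0)
    (δ : K) (hδ : δ ^ z.natAbs = constantCoeff ((if z < 0 then Y⁻¹ else Y) : (K⟦X⟧)ˣ)) :
    ∃ γ : (K⟦X⟧)ˣ, γ ^ z = Y := by
  have hnA : z.natAbs ≠ 0 := by omega
  obtain ⟨y, hyu, hy⟩ := ps_exists_nth_root (((if z < 0 then Y⁻¹ else Y) : (K⟦X⟧)ˣ) : K⟦X⟧)
    (Units.isUnit _) z.natAbs hnA δ hδ
  refine ⟨hyu.unit, ?_⟩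
  have hpow : hyu.unit ^ z.natAbs = (if z < 0 then Y⁻¹ else Y) := by
    apply Units.ext
    rw [Units.val_pow_eq_pow_val, IsUnit.unit_spec, hy]
  by_cases hneg : z < 0
  · have : z = -(z.natAbs : ℤ) := by omega
    rw [this, zpow_neg, zpow_natCast, hpow, if_pos hneg, inv_inv]
  · have : z = (z.natAbs : ℤ) := by omega
    rw [this, zpow_natCast, hpow, if_neg hneg]

end AuxPowerSeries

section AuxLinear

/-- Evaluation of an integer linear functional on `ℤ^n` as a sum over coordinates. -/
theorem lin_eval {n : ℕ} (u : (Fin n → ℤ) →ₗ[ℤ] ℤ) (y : Fin n → ℤ) :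
    u y = ∑ j, y j * u (Pi.single j 1) := by
  conv_lhs => rw [← Finset.univ_sum_single y]
  rw [map_sum]
  refine Finset.sum_congr rfl fun j _ => ?_
  have h : Pi.single j (y j) = (y j • Pi.single j (1 : ℤ) : Fin n → ℤ) := by
    ext j'
    rcases eq_or_ne j' j with rfl | hne
    · simp
    · simp [Pi.single_eq_of_ne hne]
  rw [h, map_smul, smul_eq_mul]

/-- Precomposition with `ν` as a linear map on dual spaces. -/
def compLM {d r : ℕ} (ν : (Fin r → ℤ) →ₗ[ℤ] (Fin d → ℤ)) :
    ((Fin d → ℤ) →ₗ[ℤ] ℤ) →ₗ[ℤ] ((Fin r → ℤ) →ₗ[ℤ] ℤ) where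
  toFun u := u.comp ν
  map_add' a b := LinearMap.add_comp _ _ _
  map_smul' c a := LinearMap.smul_comp _ _ _

@[simp] theorem compLM_apply {d r : ℕ} (ν : (Fin r → ℤ) →ₗ[ℤ] (Fin d → ℤ))
    (u : (Fin d → ℤ) →ₗ[ℤ] ℤ) : compLM ν u = u.comp ν := rfl

end AuxLinear

/-- A witness for STATEMENT 13: a finite field extension `k''` of `k'` together
with a monoid homomorphism `ψ : F → k''[[t]]` whose `t`-adic orders are given by
pairing with `w̃` and which lifts `φ : P → k'[[t]]` along `ν*`. -/
structure ArcLiftWitness (k' : Type u) [Field k'] {d r : ℕ}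
    (ν : (Fin r → ℤ) →ₗ[ℤ] (Fin d → ℤ))
    (P : Set ((Fin d → ℤ) →ₗ[ℤ] ℤ))
    (F : Set ((Fin r → ℤ) →ₗ[ℤ] ℤ))
    (tw : Fin r → ℕ)
    (φ : ((Fin d → ℤ) →ₗ[ℤ] ℤ) → PowerSeries k') : Type (u + 1) where
  k'' : Type u
  [fieldk'' : Field k'']
  [algk'' : Algebra k' k'']
  finite : FiniteDimensional k' k''
  ψ : ((Fin r → ℤ) →ₗ[ℤ] ℤ) → PowerSeries k''
  ψ_one : ψ 0 = 1
  ψ_mul : ∀ f ∈ F, ∀ g ∈ F, ψ (f + g) = ψ f * ψ g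
  ψ_order : ∀ f ∈ F, ∃ mo : ℕ,
    (ψ f).order = mo ∧ (mo : ℤ) = f (fun i => (tw i : ℤ))
  ψ_compat : ∀ u ∈ P, ψ (u.comp ν) = PowerSeries.map (algebraMap k' k'') (φ u)

set_option maxHeartbeats 1000000 in
theorem stmt13 (k' : Type u) [Field k'] [CharZero k']
    (d r : ℕ) (v : Fin r → Fin d → ℤ) (hv : ∀ i, v i ≠ 0)
    (σ : Set (Fin d → ℝ))
    (hσ : σ = {x | ∃ c : Fin r → ℝ, (∀ i, 0 ≤ c i) ∧
      x = ∑ i, c i • (fun j => (v i j : ℝ))})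
    (hsalient : ∀ x ∈ σ, -x ∈ σ → x = 0)
    (hfull : Submodule.span ℝ σ = ⊤)
    (ν : (Fin r → ℤ) →ₗ[ℤ] (Fin d → ℤ))
    (hν : ∀ i, ν (Pi.single i 1) = v i)
    (P : Set ((Fin d → ℤ) →ₗ[ℤ] ℤ))
    (hP : P = {u | ∀ x ∈ σ, 0 ≤ ∑ j, (u (Pi.single j 1) : ℝ) * x j})
    (F : Set ((Fin r → ℤ) →ₗ[ℤ] ℤ))
    (hF : F = {f | ∀ i, 0 ≤ f (Pi.single i 1)})
    (w : Fin d → ℤ) (hwσ : (fun j => (w j : ℝ)) ∈ σ)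
    (tw : Fin r → ℕ) (htw : ∑ i, (tw i : ℤ) • v i = w)
    (φ : ((Fin d → ℤ) →ₗ[ℤ] ℤ) → PowerSeries k')
    (hφ_one : φ 0 = 1)
    (hφ_mul : ∀ u ∈ P, ∀ u' ∈ P, φ (u + u') = φ u * φ u')
    (hφ_order : ∀ u ∈ P, ∃ mo : ℕ, (φ u).order = mo ∧ (mo : ℤ) = u w) :
    Nonempty (ArcLiftWitness k' ν P F tw φ) := by
  classical
  -- ## Basic facts about `P`
  have hP0 : (0 : (Fin d → ℤ) →ₗ[ℤ] ℤ) ∈ P := by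
    rw [hP]; intro x _; simp
  have hPadd : ∀ u ∈ P, ∀ u' ∈ P, u + u' ∈ P := by
    intro u hu u' hu'
    rw [hP] at hu hu' ⊢
    intro x hx
    have h1 := hu x hx
    have h2 := hu' x hx
    simp only [LinearMap.add_apply]
    push_cast
    rw [Finset.sum_congr rfl (fun j _ => add_mul ((u (Pi.single j 1) : ℝ)) _ (x j)),
      Finset.sum_add_distrib]
    positivity
  -- pairing with integer vectors
  have hpair : ∀ (u : (Fin d → ℤ) →ₗ[ℤ] ℤ) (y : Fin d → ℤ),
      ∑ j, (u (Pi.single j 1) : ℝ) * (y j : ℝ) = ((u y : ℤ) : ℝ) := by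
    intro u y
    rw [lin_eval u y]
    push_cast
    refine Finset.sum_congr rfl fun j _ => ?_
    ring
  -- each `v i` (viewed over `ℝ`) lies in `σ`
  have hvσ : ∀ i, (fun j => (v i j : ℝ)) ∈ σ := by
    intro i
    rw [hσ]
    refine ⟨fun i' => if i' = i then 1 else 0, fun i' => by positivity, ?_⟩
    funext j
    simp only [Finset.sum_apply, Pi.smul_apply, smul_eq_mul]
    rw [Finset.sum_eq_single i]
    · simp
    · intro b _ hbi; simp [hbi]
    · intro h; exact absurd (Finset.mem_univ i) h
  have hPv : ∀ u ∈ P, ∀ i, 0 ≤ u (v i) := by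
    intro u hu i
    rw [hP] at hu
    have := hu _ (hvσ i)
    rw [hpair u (v i)] at this
    exact_mod_cast this
  -- ## Injectivity of `u ↦ u ∘ ν`
  have hker : ∀ u : (Fin d → ℤ) →ₗ[ℤ] ℤ, u.comp ν = 0 → u = 0 := by
    intro u hu
    have hviz : ∀ i, u (v i) = 0 := by
      intro i
      have := congrArg (fun f => f (Pi.single i 1)) hu
      simp only [LinearMap.comp_apply, LinearMap.zero_apply] at this
      rwa [hν i] at this
    set gR : (Fin d → ℝ) →ₗ[ℝ] ℝ :=
      ∑ j, ((u (Pi.single j 1) : ℝ)) • LinearMap.proj j with hgR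
    have hg_apply : ∀ x : Fin d → ℝ, gR x = ∑ j, (u (Pi.single j 1) : ℝ) * x j := by
      intro x
      rw [hgR]
      simp [LinearMap.sum_apply, LinearMap.proj_apply, smul_eq_mul]
    have hgσ : ∀ x ∈ σ, gR x = 0 := by
      intro x hx
      rw [hσ] at hx
      obtain ⟨c, _, rfl⟩ := hx
      rw [map_sum]
      refine Finset.sum_eq_zero fun i _ => ?_
      rw [map_smul, smul_eq_mul, hg_apply, hpair u (v i), hviz i]
      simp
    have hgzero : ∀ x, gR x = 0 := by
      have hle : Submodule.span ℝ σ ≤ LinearMap.ker gR :=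
        Submodule.span_le.mpr fun x hx => hgσ x hx
      rw [hfull] at hle
      intro x
      exact hle (Submodule.mem_top : x ∈ ⊤)
    have hcoord : ∀ j, u (Pi.single j 1) = 0 := by
      intro j
      have := hgzero (Pi.single j (1 : ℝ))
      rw [hg_apply] at this
      have heval : ∑ j', (u (Pi.single j' 1) : ℝ) * (Pi.single j (1:ℝ) : Fin d → ℝ) j'
          = (u (Pi.single j 1) : ℝ) := by
        rw [Finset.sum_eq_single j]
        · simp
        · intro b _ hbj
          rw [Pi.single_eq_of_ne hbj]
          simp
        · intro h; exact absurd (Finset.mem_univ j) h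
      rw [heval] at this
      exact_mod_cast this
    refine Module.Basis.ext (Pi.basisFun ℤ (Fin d)) fun j => ?_
    rw [Pi.basisFun_apply, LinearMap.zero_apply]
    exact hcoord j
  have hTinj : Function.Injective (compLM ν) := by
    intro u₁ u₂ h
    have : (u₁ - u₂).comp ν = 0 := by
      rw [LinearMap.sub_comp]
      simp only [compLM_apply] at h
      rw [h, sub_self]
    have := hker _ this
    rwa [sub_eq_zero] at this
  -- ## Decompose `φ u = X ^ N u * G u` with `G u` a unit
  have hkey : ∀ u : (Fin d → ℤ) →ₗ[ℤ] ℤ, ∃ (nn : ℕ) (gu : (PowerSeries k')ˣ),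
      u ∈ P → ((nn : ℤ) = u w ∧ φ u = X ^ nn * (gu : PowerSeries k')) := by
    intro u
    by_cases hu : u ∈ P
    · obtain ⟨mo, hord, hmow⟩ := hφ_order u hu
      have hne : φ u ≠ 0 := by
        intro h0
        rw [h0, PowerSeries.order_zero] at hord
        exact (ENat.top_ne_coe mo) hord
      obtain ⟨gu, hgu⟩ := PowerSeries.isUnit_divided_by_X_pow_order hne
      refine ⟨mo, gu, fun _ => ⟨hmow, ?_⟩⟩
      have h2 : (φ u).order.lift (PowerSeries.order_finite_iff_ne_zero.mpr hne) = mo := by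
        have : (((φ u).order.lift (PowerSeries.order_finite_iff_ne_zero.mpr hne) : ℕ) : ℕ∞)
            = ((mo : ℕ) : ℕ∞) := by rw [ENat.coe_lift, hord]
        exact_mod_cast this
      have h1 : X ^ (φ u).order.lift (PowerSeries.order_finite_iff_ne_zero.mpr hne) *
          PowerSeries.divXPowOrder (φ u) = φ u := by
        have := PowerSeries.X_pow_order_mul_divXPowOrder (f := φ u)
        rw [hord, ENat.toNat_coe, ← h2] at this
        exact this
      rw [hgu, ← h2]
      exact h1.symm
    · exact ⟨0, 1, fun h => absurd h hu⟩
  choose N G hNG using hkey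
  have hN : ∀ u ∈ P, ((N u : ℤ)) = u w := fun u hu => (hNG u hu).1
  have hGspec : ∀ u ∈ P, φ u = X ^ N u * (G u : PowerSeries k') := fun u hu => (hNG u hu).2
  have hNadd : ∀ u ∈ P, ∀ u' ∈ P, N (u + u') = N u + N u' := by
    intro u hu u' hu'
    have : ((N (u + u') : ℤ)) = ((N u + N u' : ℕ) : ℤ) := by
      rw [hN _ (hPadd u hu u' hu'), LinearMap.add_apply]
      push_cast
      rw [hN u hu, hN u' hu']
    exact_mod_cast this
  have hGmul : ∀ u ∈ P, ∀ u' ∈ P, G (u + u') = G u * G u' := by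
    intro u hu u' hu'
    have h0 := hφ_mul u hu u' hu'
    rw [hGspec _ (hPadd u hu u' hu'), hGspec u hu, hGspec u' hu',
      hNadd u hu u' hu'] at h0
    have h1 : X ^ (N u + N u') * ((G (u + u') : PowerSeries k'))
        = X ^ (N u + N u') * ((G u : PowerSeries k') * (G u' : PowerSeries k')) := by
      rw [h0, pow_add]; ring
    have h2 := mul_left_cancel₀ (pow_ne_zero _ (PowerSeries.X_ne_zero :
      (X : PowerSeries k') ≠ 0)) h1
    exact Units.ext (by rw [Units.val_mul]; exact h2)
  have hG0 : G 0 = 1 := by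
    have hN0 : N 0 = 0 := by
      have := hN 0 hP0
      simp only [LinearMap.zero_apply] at this
      exact_mod_cast this
    have := hGspec 0 hP0
    rw [hφ_one, hN0, pow_zero, one_mul] at this
    exact Units.ext (by rw [← this]; rfl)
  -- ## Representation of elements of `span ℤ P` as differences
  have hPsmulN : ∀ (m : ℕ) (u : (Fin d → ℤ) →ₗ[ℤ] ℤ), u ∈ P → ((m : ℤ) • u) ∈ P := by
    intro m
    induction m with
    | zero => intro u hu; simpa using hP0
    | succ m ih =>
      intro u hu
      have : ((m + 1 : ℕ) : ℤ) • u = (m : ℤ) • u + u := by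
        push_cast; rw [add_smul, one_smul]
      rw [this]
      exact hPadd _ (ih u hu) _ hu
  have hrep : ∀ x : (Fin d → ℤ) →ₗ[ℤ] ℤ, ∃ u₁ u₂, x ∈ Submodule.span ℤ P →
      (u₁ ∈ P ∧ u₂ ∈ P ∧ x = u₁ - u₂) := by
    intro x
    by_cases hx : x ∈ Submodule.span ℤ P
    · suffices h : ∃ u₁ u₂, u₁ ∈ P ∧ u₂ ∈ P ∧ x = u₁ - u₂ by
        obtain ⟨u₁, u₂, h1, h2, h3⟩ := h
        exact ⟨u₁, u₂, fun _ => ⟨h1, h2, h3⟩⟩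
      refine Submodule.span_induction ?_ ?_ ?_ ?_ hx
      · exact fun y hy => ⟨y, 0, hy, hP0, by simp⟩
      · exact ⟨0, 0, hP0, hP0, by simp⟩
      · rintro a b _ _ ⟨a1, a2, ha1, ha2, hae⟩ ⟨b1, b2, hb1, hb2, hbe⟩
        exact ⟨a1 + b1, a2 + b2, hPadd _ ha1 _ hb1, hPadd _ ha2 _ hb2,
          by rw [hae, hbe]; abel⟩
      · rintro n y _ ⟨y1, y2, hy1, hy2, hye⟩
        obtain ⟨m, rfl | rfl⟩ := Int.eq_nat_or_neg n
        · exact ⟨(m : ℤ) • y1, (m : ℤ) • y2, hPsmulN m y1 hy1, hPsmulN m y2 hy2,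
            by rw [hye, smul_sub]⟩
        · exact ⟨(m : ℤ) • y2, (m : ℤ) • y1, hPsmulN m y2 hy2, hPsmulN m y1 hy1,
            by rw [hye]; module⟩
    · exact ⟨0, 0, fun h => absurd h hx⟩
  choose R1 R2 hR using hrep
  have hwd : ∀ u₁ ∈ P, ∀ u₂ ∈ P, ∀ u₃ ∈ P, ∀ u₄ ∈ P, u₁ - u₂ = u₃ - u₄ →
      G u₁ * G u₄ = G u₃ * G u₂ := by
    intro u₁ h1 u₂ h2 u₃ h3 u₄ h4 h
    rw [sub_eq_sub_iff_add_eq_add] at h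
    rw [← hGmul u₁ h1 u₄ h4, ← hGmul u₃ h3 u₂ h2, h]
  set Sfun : ((Fin d → ℤ) →ₗ[ℤ] ℤ) → (PowerSeries k')ˣ :=
    fun x => G (R1 x) / G (R2 x) with hSfun
  have hS_P : ∀ u ∈ P, Sfun u = G u := by
    intro u hu
    obtain ⟨h1, h2, h3⟩ := hR u (Submodule.subset_span hu)
    have hw := hwd (R1 u) h1 (R2 u) h2 u hu 0 hP0 (by rw [← h3]; simp)
    rw [hG0, mul_one] at hw
    show G (R1 u) / G (R2 u) = G u
    rw [div_eq_iff_eq_mul]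
    exact hw
  have hS_add : ∀ x ∈ Submodule.span ℤ P, ∀ y ∈ Submodule.span ℤ P,
      Sfun (x + y) = Sfun x * Sfun y := by
    intro x hx y hy
    obtain ⟨hx1, hx2, hxe⟩ := hR x hx
    obtain ⟨hy1, hy2, hye⟩ := hR y hy
    obtain ⟨hz1, hz2, hze⟩ := hR (x + y) (Submodule.add_mem _ hx hy)
    show G (R1 (x + y)) / G (R2 (x + y))
        = (G (R1 x) / G (R2 x)) * (G (R1 y) / G (R2 y))
    rw [div_mul_div_comm, div_eq_div_iff_mul_eq_mul]
    have heq : R1 (x + y) - R2 (x + y) = (R1 x + R1 y) - (R2 x + R2 y) := by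
      rw [← hze]
      conv_lhs => rw [hxe, hye]
      abel
    have := hwd _ hz1 _ hz2 _ (hPadd _ hx1 _ hy1) _ (hPadd _ hx2 _ hy2) heq
    rw [hGmul _ hx1 _ hy1, hGmul _ hx2 _ hy2] at this
    exact this
  -- ## Smith normal form for `H = (compLM ν)(span ℤ P)`
  obtain ⟨n, bM, bN, femb, a, hsnf⟩ :
      ∃ (n : ℕ) (bM : Module.Basis (Fin r) ℤ ((Fin r → ℤ) →ₗ[ℤ] ℤ))
        (bN : Module.Basis (Fin n) ℤ (Submodule.map (compLM ν) (Submodule.span ℤ P)))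
        (femb : Fin n ↪ Fin r) (a : Fin n → ℤ),
        ∀ j, ((bN j : (Fin r → ℤ) →ₗ[ℤ] ℤ)) = a j • bM (femb j) := by
    have bdual : Module.Basis (Fin r) ℤ ((Fin r → ℤ) →ₗ[ℤ] ℤ) :=
      (Pi.basisFun ℤ (Fin r)).dualBasis
    obtain ⟨n, snf⟩ := Submodule.smithNormalForm bdual
      (Submodule.map (compLM ν) (Submodule.span ℤ P))
    exact ⟨n, snf.bM, snf.bN, snf.f, snf.a, snf.snf⟩
  have ha0 : ∀ j, a j ≠ 0 := by
    intro j haj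
    have h1 := hsnf j
    rw [haj, zero_smul] at h1
    exact (Module.Basis.ne_zero bN j) (by exact_mod_cast Subtype.ext h1)
  -- the canonical isomorphism onto the image
  set e := Submodule.equivMapOfInjective (compLM ν) hTinj (Submodule.span ℤ P) with he
  set y : Fin n → (PowerSeries k')ˣ :=
    fun j => Sfun ((e.symm (bN j) : ((Fin d → ℤ) →ₗ[ℤ] ℤ))) with hy
  set c : Fin n → k' := fun j => constantCoeff
    (((if a j < 0 then (y j)⁻¹ else y j) : (PowerSeries k')ˣ) : PowerSeries k') with hc
  set q : Polynomial k' := ∏ j, (Polynomial.X ^ (a j).natAbs - Polynomial.C (c j)) with hq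
  have hm0 : ∀ j, (a j).natAbs ≠ 0 := fun j => by
    have := ha0 j; omega
  have hqmonic : q.Monic :=
    Polynomial.monic_prod_of_monic _ _ fun j _ => Polynomial.monic_X_pow_sub_C _ (hm0 j)
  -- the finite extension
  letI K'' := q.SplittingField
  haveI : CharZero K'' := charZero_of_injective_algebraMap (algebraMap k' K'').injective
  have hroot : ∀ j, ∃ δ : K'', δ ^ (a j).natAbs = algebraMap k' K'' (c j) := by
    intro j
    have hsp : Polynomial.Splits ((Polynomial.X ^ (a j).natAbs -
        Polynomial.C (c j)).map (algebraMap k' K'')) :=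
      (Polynomial.SplittingField.splits q).of_dvd (Polynomial.map_ne_zero hqmonic.ne_zero)
        (Polynomial.map_dvd _ (Finset.dvd_prod_of_mem _ (Finset.mem_univ j)))
    have hdeg : ((Polynomial.X ^ (a j).natAbs - Polynomial.C (c j)).map
        (algebraMap k' K'')).degree ≠ 0 := by
      rw [Polynomial.degree_map, Polynomial.degree_X_pow_sub_C (Nat.pos_of_ne_zero (hm0 j)) (c j)]
      exact_mod_cast hm0 j
    obtain ⟨δ, hδ⟩ := hsp.exists_eval_eq_zero hdeg
    refine ⟨δ, ?_⟩
    simpa [sub_eq_zero] using hδ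
  choose δ hδ using hroot
  -- extract roots of the units `y j` in `K''⟦X⟧`
  have hYroot : ∀ j, ∃ γ : (PowerSeries K'')ˣ, γ ^ (a j) =
      Units.map (PowerSeries.map (algebraMap k' K'')).toMonoidHom (y j) := by
    intro j
    apply ps_exists_zpow_root _ (a j) (ha0 j) (δ j)
    rw [hδ j]
    have hcomm : ((if a j < 0
        then (Units.map (PowerSeries.map (algebraMap k' K'')).toMonoidHom (y j))⁻¹
        else Units.map (PowerSeries.map (algebraMap k' K'')).toMonoidHom (y j))
          : (PowerSeries K'')ˣ)
        = Units.map (PowerSeries.map (algebraMap k' K'')).toMonoidHom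
          ((if a j < 0 then (y j)⁻¹ else y j) : (PowerSeries k')ˣ) := by
      by_cases hneg : a j < 0
      · rw [if_pos hneg, if_pos hneg, ← map_inv]
      · rw [if_neg hneg, if_neg hneg]
    rw [hcomm]
    have : ((Units.map (PowerSeries.map (algebraMap k' K'')).toMonoidHom
        ((if a j < 0 then (y j)⁻¹ else y j) : (PowerSeries k')ˣ)) : PowerSeries K'')
        = PowerSeries.map (algebraMap k' K'')
          (((if a j < 0 then (y j)⁻¹ else y j) : (PowerSeries k')ˣ) : PowerSeries k') :=
      Units.coe_map _ _
    rw [this, hc]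
    rw [← PowerSeries.coeff_zero_eq_constantCoeff_apply, PowerSeries.coeff_map,
      PowerSeries.coeff_zero_eq_constantCoeff_apply]
  choose γ hγ using hYroot
  -- ## The group homomorphism `B` on the full dual lattice
  set γfun : Fin r → (PowerSeries K'')ˣ :=
    fun i => if h : ∃ j, femb j = i then γ h.choose else 1 with hγfun_def
  have hγfun : ∀ j, γfun (femb j) = γ j := by
    intro j
    have hex : ∃ j', femb j' = femb j := ⟨j, rfl⟩
    show (if h : ∃ j', femb j' = femb j then γ h.choose else 1) = γ j
    rw [dif_pos hex]
    exact congrArg γ (femb.injective hex.choose_spec)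
  set B : ((Fin r → ℤ) →ₗ[ℤ] ℤ) →ₗ[ℤ] Additive (PowerSeries K'')ˣ :=
    bM.constr ℕ (fun i => Additive.ofMul (γfun i)) with hB
  have hBbasis : ∀ i, B (bM i) = Additive.ofMul (γfun i) :=
    fun i => bM.constr_basis ℕ _ i
  have hBN : ∀ j, B ((bN j : (Fin r → ℤ) →ₗ[ℤ] ℤ)) =
      Additive.ofMul (Units.map (PowerSeries.map (algebraMap k' K'')).toMonoidHom (y j)) := by
    intro j
    rw [hsnf j, map_smul, hBbasis, hγfun j, ← ofMul_zpow, hγ j]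
  -- the homomorphism on `H` induced by `Sfun`
  set SH : (Submodule.map (compLM ν) (Submodule.span ℤ P)) →ₗ[ℤ]
      Additive (PowerSeries K'')ˣ :=
    (AddMonoidHom.mk' (fun x => Additive.ofMul
      (Units.map (PowerSeries.map (algebraMap k' K'')).toMonoidHom
        (Sfun ((e.symm x : ((Fin d → ℤ) →ₗ[ℤ] ℤ)))))) (by
      intro x₁ x₂
      beta_reduce
      rw [map_add]
      have hadd : ((e.symm x₁ + e.symm x₂ : ↥(Submodule.span ℤ P)) :
          ((Fin d → ℤ) →ₗ[ℤ] ℤ)) = (e.symm x₁ : _) + (e.symm x₂ : _) := rfl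
      rw [hadd, hS_add _ (e.symm x₁).2 _ (e.symm x₂).2, map_mul, ofMul_mul]
      )).toIntLinearMap with hSH
  have hagree : B ∘ₗ (Submodule.map (compLM ν) (Submodule.span ℤ P)).subtype = SH := by
    refine Module.Basis.ext bN fun j => ?_
    rw [LinearMap.comp_apply, Submodule.subtype_apply, hBN j]
    rfl
  -- value of `B` on `u.comp ν` for `u ∈ P`
  have hBval : ∀ u ∈ P, B (u.comp ν) =
      Additive.ofMul (Units.map (PowerSeries.map (algebraMap k' K'')).toMonoidHom (G u)) := by
    intro u hu
    have hxu : (⟨u, Submodule.subset_span hu⟩ : ↥(Submodule.span ℤ P)) = e.symm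
        (e ⟨u, Submodule.subset_span hu⟩) := (e.symm_apply_apply _).symm
    have hcoe : ((e ⟨u, Submodule.subset_span hu⟩ :
        ↥(Submodule.map (compLM ν) (Submodule.span ℤ P))) : ((Fin r → ℤ) →ₗ[ℤ] ℤ))
        = u.comp ν :=
      Submodule.coe_equivMapOfInjective_apply (compLM ν) hTinj (Submodule.span ℤ P) _
    have h1 := congrArg (fun (L : (Submodule.map (compLM ν) (Submodule.span ℤ P)) →ₗ[ℤ]
        Additive (PowerSeries K'')ˣ) => L (e ⟨u, Submodule.subset_span hu⟩)) hagree
    simp only [LinearMap.comp_apply, Submodule.subtype_apply] at h1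
    rw [hcoe] at h1
    rw [h1, hSH]
    show Additive.ofMul (Units.map (PowerSeries.map (algebraMap k' K'')).toMonoidHom
      (Sfun ((e.symm (e ⟨u, Submodule.subset_span hu⟩) : _) :
        ((Fin d → ℤ) →ₗ[ℤ] ℤ)))) = _
    rw [← hxu]
    show Additive.ofMul (Units.map (PowerSeries.map (algebraMap k' K'')).toMonoidHom
      (Sfun u)) = _
    rw [hS_P u hu]
  -- positivity of pairings with `tw` on `F`
  have hFpos : ∀ f ∈ F, 0 ≤ f (fun i => ((tw i : ℤ))) := by
    intro f hf
    rw [hF] at hf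
    rw [lin_eval f]
    exact Finset.sum_nonneg fun i _ => mul_nonneg (Int.natCast_nonneg _) (hf i)
  -- the image of `tw` under `ν` is `w`
  have hνtw : ν (fun i => ((tw i : ℤ))) = w := by
    have h1 : (fun i => ((tw i : ℤ))) = ∑ i, Pi.single i ((tw i : ℤ)) :=
      (Finset.univ_sum_single _).symm
    rw [h1, map_sum]
    rw [← htw]
    refine Finset.sum_congr rfl fun i _ => ?_
    have h2 : Pi.single i ((tw i : ℤ)) = ((tw i : ℤ) • Pi.single i (1 : ℤ) : Fin r → ℤ) := by
      ext i'
      rcases eq_or_ne i' i with rfl | hne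
      · simp
      · simp [Pi.single_eq_of_ne hne]
    rw [h2, map_smul, hν i]
  -- ## Assemble the witness
  refine ⟨{
    k'' := K''
    finite := inferInstance
    ψ := fun f => X ^ (f (fun i => ((tw i : ℤ)))).toNat *
      ((Additive.toMul (B f) : (PowerSeries K'')ˣ) : PowerSeries K'')
    ψ_one := ?_
    ψ_mul := ?_
    ψ_order := ?_
    ψ_compat := ?_ }⟩
  · beta_reduce
    rw [LinearMap.zero_apply, Int.toNat_zero, pow_zero, one_mul, map_zero]
    rfl
  · intro f hf g hg
    beta_reduce
    rw [LinearMap.add_apply, Int.toNat_add (hFpos f hf) (hFpos g hg), pow_add, map_add,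
      toMul_add, Units.val_mul]
    ring
  · intro f hf
    beta_reduce
    refine ⟨(f (fun i => ((tw i : ℤ)))).toNat, ?_, Int.toNat_of_nonneg (hFpos f hf)⟩
    rw [PowerSeries.order_mul, PowerSeries.order_X_pow,
      PowerSeries.order_zero_of_unit (Units.isUnit _), add_zero]
  · intro u hu
    beta_reduce
    have hexp : ((u.comp ν) (fun i => ((tw i : ℤ)))).toNat = N u := by
      rw [LinearMap.comp_apply, hνtw, ← hN u hu, Int.toNat_natCast]
    rw [hexp, hBval u hu]
    have hval : ((Additive.toMul (Additive.ofMul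
        (Units.map (PowerSeries.map (algebraMap k' K'')).toMonoidHom (G u))) :
          (PowerSeries K'')ˣ) : PowerSeries K'')
        = PowerSeries.map (algebraMap k' K'') ((G u : PowerSeries k')) :=
      Units.coe_map _ _
    rw [hval, hGspec u hu, map_mul, map_pow, PowerSeries.map_X]
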